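/- arXiv:1905.03713 — 4 statements merged into one kernel-verified Lean document; each statement's English description precedes it below -/
import Mathlib

section
/- Fix θ ∈ ℝ. For every triple x, y, z ∈ ℂ³ that is orthonormal with respect to the real inner product g, one has |Re(e^{−iθ}·Υ₀(x,y,z))| ≤ 1. (Comass-one property of the phase-θ special Lagrangian form, Proposition 2.1.) -/
noncomputable section

open Complex

/-- `ℂ³`, identified with `ℝ⁶` via `(x₁,…,x₆) ↦ (x₁+i x₄, x₂+i x₅, x₃+i x₆)`. -/
abbrev C3 : Type := Fin 3 → ℂ

/-- The standard Hermitian inner product `h(u,v) = Σᵢ conj(uᵢ)·vᵢ` on `ℂ³`. -/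
def Hh (u v : C3) : ℂ := ∑ i, starRingEnd ℂ (u i) * v i

/-- The induced real inner product `g = Re h`. -/
def gR (u v : C3) : ℝ := (Hh u v).re

/-- The holomorphic volume form `Υ₀(u,v,w) = det [u v w]`. -/
def Ups (u v w : C3) : ℂ := Matrix.det (Matrix.of fun i j => ![u, v, w] j i)

/-- The phase-`θ` form `Υ_θ = e^{−iθ}·Υ₀`. -/
def UpsPh (θ : ℝ) (u v w : C3) : ℂ := Complex.exp (-(θ : ℂ) * Complex.I) * Ups u v w

/-- Complex Lagrange (Binet–Cauchy) identity in dimension 3. -/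
lemma lagrange (a b : C3) :
    (∑ i, Complex.normSq (a i)) * (∑ i, Complex.normSq (b i)) =
      Complex.normSq (∑ i, a i * starRingEnd ℂ (b i)) +
      (Complex.normSq (a 1 * b 2 - a 2 * b 1) +
       Complex.normSq (a 2 * b 0 - a 0 * b 2) +
       Complex.normSq (a 0 * b 1 - a 1 * b 0)) := by
  simp only [Fin.sum_univ_three, Complex.normSq_apply, Complex.add_re, Complex.add_im,
    Complex.mul_re, Complex.mul_im, Complex.sub_re, Complex.sub_im,
    Complex.conj_re, Complex.conj_im]
  ring

/-- The diagonal of `g` is the sum of squared moduli. -/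
lemma gdiag (u : C3) : gR u u = ∑ i, Complex.normSq (u i) := by
  simp only [gR, Hh, Fin.sum_univ_three, Complex.add_re, Complex.mul_re,
    Complex.conj_re, Complex.conj_im, Complex.normSq_apply]
  ring

/-- **Proposition 2.1** (Harvey–Lawson): the phase-`θ` special Lagrangian form
`Re(Υ_θ)` has comass one: `|Re(e^{−iθ}·Υ₀(x,y,z))| ≤ 1` for every `g`-orthonormal
triple `x, y, z` in `ℂ³`. -/
theorem comass_one (θ : ℝ) (x y z : C3)
    (hx : gR x x = 1) (hy : gR y y = 1) (hz : gR z z = 1)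
    (hxy : gR x y = 0) (hxz : gR x z = 0) (hyz : gR y z = 0) :
    |(UpsPh θ x y z).re| ≤ 1 := by
  rw [gdiag] at hx hy hz
  set c : C3 := ![x 1 * y 2 - x 2 * y 1, x 2 * y 0 - x 0 * y 2, x 0 * y 1 - x 1 * y 0] with hc
  have hdet : Ups x y z = ∑ i, c i * z i := by
    simp [Ups, Matrix.det_fin_three, hc, Fin.sum_univ_three]
    ring
  have h1 : ∑ i, Complex.normSq (c i) ≤ 1 := by
    have hl := lagrange x y
    rw [hx, hy] at hl
    simp only [hc, Fin.sum_univ_three, Matrix.cons_val_zero, Matrix.cons_val_one,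
      Matrix.head_cons, Matrix.cons_val_two, Matrix.tail_cons]
    have := Complex.normSq_nonneg (∑ i, x i * starRingEnd ℂ (y i))
    linarith
  have h2 : Complex.normSq (Ups x y z) ≤ 1 := by
    rw [hdet]
    have hl := lagrange c (fun i => starRingEnd ℂ (z i))
    simp only [Complex.normSq_conj, RingHomCompTriple.comp_apply, RingHom.id_apply,
      Complex.conj_conj] at hl
    rw [hz] at hl
    have h3 := Complex.normSq_nonneg (c 1 * starRingEnd ℂ (z 2) - c 2 * starRingEnd ℂ (z 1))
    have h4 := Complex.normSq_nonneg (c 2 * starRingEnd ℂ (z 0) - c 0 * starRingEnd ℂ (z 2))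
    have h5 := Complex.normSq_nonneg (c 0 * starRingEnd ℂ (z 1) - c 1 * starRingEnd ℂ (z 0))
    nlinarith [Complex.normSq_nonneg (∑ i, c i * z i)]
  have habs : ‖UpsPh θ x y z‖ ≤ 1 := by
    rw [UpsPh, norm_mul]
    have he : ‖Complex.exp (-(θ : ℂ) * Complex.I)‖ = 1 := by
      rw [show -(θ : ℂ) * Complex.I = ((-θ : ℝ) : ℂ) * Complex.I by push_cast; ring,
        Complex.norm_exp_ofReal_mul_I]
    rw [he, one_mul, Complex.norm_def]
    exact Real.sqrt_le_one.mpr h2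
  exact le_trans (Complex.abs_re_le_norm _) habs
end
end

section
/- Fix θ ∈ ℝ and let E ⊆ ℂ³ be a 3-dimensional real subspace. The following are equivalent: (i) for every basis (u,v,w) of E that is orthonormal with respect to g, Re(Υ_θ(u,v,w)) = 1 or Re(Υ_θ(u,v,w)) = −1; (ii) E is Lagrangian and Im(Υ_θ(u,v,w)) = 0 for all u, v, w ∈ E. (Proposition 2.2.) -/
noncomputable section

open Complex

/-- The standard symplectic form `Ω₀ = Im h`. -/
def Om (u v : C3) : ℝ := (Hh u v).im

/-! ### Auxiliary lemmas -/

lemma Hh_expand (u v : C3) :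
    Hh u v = starRingEnd ℂ (u 0) * v 0 + starRingEnd ℂ (u 1) * v 1 + starRingEnd ℂ (u 2) * v 2 := by
  simp [Hh, Fin.sum_univ_three]

lemma Ups_expand (u v w : C3) :
    Ups u v w = u 0 * v 1 * w 2 - u 0 * v 2 * w 1 - u 1 * v 0 * w 2
      + u 1 * v 2 * w 0 + u 2 * v 0 * w 1 - u 2 * v 1 * w 0 := by
  simp [Ups, Matrix.det_fin_three]; ring

lemma Om_self (x : C3) : Om x x = 0 := by
  simp [Om, Hh_expand, Complex.add_im, Complex.mul_im]; ring

lemma Hh_conj (x y : C3) : Hh y x = starRingEnd ℂ (Hh x y) := by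
  simp [Hh_expand, map_add, map_mul]; ring

lemma Om_swap (x y : C3) : Om y x = - Om x y := by
  rw [Om, Hh_conj]; simp [Om]

lemma rsmul_apply (a : ℝ) (u : C3) (i : Fin 3) : (a • u) i = (a : ℂ) * u i := by
  simp [Complex.real_smul]

lemma key_det (u v w : C3) :
    starRingEnd ℂ (Ups u v w) * Ups u v w =
      Hh u u * Hh v v * Hh w w - Hh u u * Hh v w * Hh w v
      - Hh u v * Hh v u * Hh w w + Hh u v * Hh v w * Hh w u
      + Hh u w * Hh v u * Hh w v - Hh u w * Hh v v * Hh w u := by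
  simp only [Ups_expand, Hh_expand, map_add, map_sub, map_mul]
  ring

lemma Hh_eq_I_mul (x y : C3) (h : gR x y = 0) : Hh x y = (Om x y : ℂ) * I := by
  apply Complex.ext <;> simp [Om]
  · simpa [gR] using h

lemma Hh_eq_one (x : C3) (h : gR x x = 1) : Hh x x = 1 := by
  apply Complex.ext
  · simpa [gR] using h
  · simpa [Om] using Om_self x

lemma normSq_Ups (u v w : C3)
    (huu : gR u u = 1) (hvv : gR v v = 1) (hww : gR w w = 1)
    (huv : gR u v = 0) (huw : gR u w = 0) (hvw : gR v w = 0) :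
    Complex.normSq (Ups u v w) = 1 - Om u v ^ 2 - Om u w ^ 2 - Om v w ^ 2 := by
  have hvu : gR v u = 0 := by
    have := Hh_conj u v; unfold gR; rw [this]; simpa [gR] using huv
  have hwu : gR w u = 0 := by
    have := Hh_conj u w; unfold gR; rw [this]; simpa [gR] using huw
  have hwv : gR w v = 0 := by
    have := Hh_conj v w; unfold gR; rw [this]; simpa [gR] using hvw
  have hOmvu : Om v u = - Om u v := Om_swap u v
  have hOmwu : Om w u = - Om u w := Om_swap u w
  have hOmwv : Om w v = - Om v w := Om_swap v w
  have hc : (Complex.normSq (Ups u v w) : ℂ)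
      = ((1 - Om u v ^ 2 - Om u w ^ 2 - Om v w ^ 2 : ℝ) : ℂ) := by
    rw [Complex.normSq_eq_conj_mul_self, key_det, Hh_eq_one u huu, Hh_eq_one v hvv,
      Hh_eq_one w hww, Hh_eq_I_mul u v huv, Hh_eq_I_mul u w huw, Hh_eq_I_mul v w hvw,
      Hh_eq_I_mul v u hvu, Hh_eq_I_mul w u hwu, Hh_eq_I_mul w v hwv,
      hOmvu, hOmwu, hOmwv]
    push_cast
    linear_combination ((Om u v : ℂ)^2 + (Om u w : ℂ)^2 + (Om v w : ℂ)^2) * Complex.I_sq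
  exact_mod_cast hc

lemma normSq_UpsPh (θ : ℝ) (u v w : C3) :
    Complex.normSq (UpsPh θ u v w) = Complex.normSq (Ups u v w) := by
  simp [UpsPh, Complex.normSq_mul, Complex.normSq_eq_norm_sq, Complex.norm_exp]

lemma Ups_comb (u v w : C3) (a1 a2 a3 b1 b2 b3 c1 c2 c3 : ℝ) :
    Ups (a1 • u + a2 • v + a3 • w) (b1 • u + b2 • v + b3 • w) (c1 • u + c2 • v + c3 • w)
      = ((a1 * (b2 * c3 - b3 * c2) - a2 * (b1 * c3 - b3 * c1)
          + a3 * (b1 * c2 - b2 * c1) : ℝ) : ℂ) * Ups u v w := by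
  simp only [Ups_expand, Pi.add_apply, rsmul_apply]
  push_cast
  ring

lemma Hh_comb (u v w : C3) (a1 a2 a3 b1 b2 b3 : ℝ) :
    Hh (a1 • u + a2 • v + a3 • w) (b1 • u + b2 • v + b3 • w)
      = ((a1*b1 : ℝ) : ℂ) * Hh u u + ((a1*b2 : ℝ) : ℂ) * Hh u v + ((a1*b3 : ℝ) : ℂ) * Hh u w
      + ((a2*b1 : ℝ) : ℂ) * Hh v u + ((a2*b2 : ℝ) : ℂ) * Hh v v + ((a2*b3 : ℝ) : ℂ) * Hh v w
      + ((a3*b1 : ℝ) : ℂ) * Hh w u + ((a3*b2 : ℝ) : ℂ) * Hh w v + ((a3*b3 : ℝ) : ℂ) * Hh w w := by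
  simp only [Hh_expand, Pi.add_apply, rsmul_apply, map_add, map_mul, Complex.conj_ofReal]
  push_cast
  ring

lemma Om_comb (u v w : C3) (a1 a2 a3 b1 b2 b3 : ℝ)
    (h12 : Om u v = 0) (h13 : Om u w = 0) (h23 : Om v w = 0) :
    Om (a1 • u + a2 • v + a3 • w) (b1 • u + b2 • v + b3 • w) = 0 := by
  have h21 : Om v u = 0 := by rw [Om_swap, h12, neg_zero]
  have h31 : Om w u = 0 := by rw [Om_swap, h13, neg_zero]
  have h32 : Om w v = 0 := by rw [Om_swap, h23, neg_zero]
  have d1 : (Hh u u).im = 0 := Om_self u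
  have d2 : (Hh v v).im = 0 := Om_self v
  have d3 : (Hh w w).im = 0 := Om_self w
  unfold Om at *
  rw [Hh_comb]
  simp [Complex.add_im, Complex.im_ofReal_mul, h12, h13, h23, h21, h31, h32, d1, d2, d3]

lemma exists_triple (E : Submodule ℝ C3) (hdim : Module.finrank ℝ E = 3) :
    ∃ u v w : C3, u ∈ E ∧ v ∈ E ∧ w ∈ E ∧
      gR u u = 1 ∧ gR v v = 1 ∧ gR w w = 1 ∧
      gR u v = 0 ∧ gR u w = 0 ∧ gR v w = 0 ∧
      ∀ x ∈ E, ∃ a b c : ℝ, x = a • u + b • v + c • w := by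
  classical
  set V := EuclideanSpace ℂ (Fin 3) with hV
  let φ : V ≃ₗ[ℝ] C3 := WithLp.linearEquiv 2 ℝ (Fin 3 → ℂ)
  haveI : FiniteDimensional ℝ V := Module.Finite.trans ℂ V
  let E' : Submodule ℝ V := E.map φ.symm.toLinearMap
  have hfr : Module.finrank ℝ E' = 3 := by
    rw [LinearEquiv.finrank_map_eq]; exact hdim
  let b : OrthonormalBasis (Fin 3) ℝ E' := (stdOrthonormalBasis ℝ E').reindex (finCongr hfr)
  have hb := b.orthonormal
  rw [orthonormal_iff_ite] at hb
  have hinner : ∀ x y : V, (inner ℂ x y : ℂ) = Hh (φ x) (φ y) := by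
    intro x y
    simp [PiLp.inner_apply, RCLike.inner_apply, Hh, φ, WithLp.linearEquiv]
    show (inner ℂ (x : EuclideanSpace ℂ (Fin 3)) y : ℂ) = _
    rw [PiLp.inner_apply]
    simp [RCLike.inner_apply]
    exact Finset.sum_congr rfl fun _ _ => mul_comm _ _
  have hreal : ∀ x y : V, (inner ℝ x y : ℝ) = gR (φ x) (φ y) := by
    intro x y
    exact (real_inner_eq_re_inner ℂ x y).trans (by rw [gR, ← hinner]; rfl)
  have hmem : ∀ i, φ (b i : V) ∈ E := by
    intro i
    have : (b i : V) ∈ E' := (b i).2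
    obtain ⟨x, hx, hx2⟩ := this
    have : φ (b i : V) = x := by rw [← hx2]; simp
    rw [this]; exact hx
  have hgR : ∀ i j, gR (φ (b i : V)) (φ (b j : V)) = if i = j then 1 else 0 := by
    intro i j
    rw [← hreal, ← Submodule.coe_inner, hb i j]
  refine ⟨φ (b 0 : V), φ (b 1 : V), φ (b 2 : V), hmem 0, hmem 1, hmem 2,
    by simpa using hgR 0 0, by simpa using hgR 1 1, by simpa using hgR 2 2,
    by simpa using hgR 0 1, by simpa using hgR 0 2, by simpa using hgR 1 2, ?_⟩
  intro x hx
  have hx' : φ.symm x ∈ E' := ⟨x, hx, rfl⟩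
  set y : E' := ⟨φ.symm x, hx'⟩
  have hy := b.sum_repr y
  refine ⟨b.repr y 0, b.repr y 1, b.repr y 2, ?_⟩
  have hco : (y : V) = b.repr y 0 • (b 0 : V) + b.repr y 1 • (b 1 : V)
      + b.repr y 2 • (b 2 : V) := by
    conv_lhs => rw [← hy]
    push_cast [Fin.sum_univ_three]
    rfl
  have hxy : x = φ (y : V) := by simp [y]
  rw [hxy, hco]
  simp [map_add, map_smul]

/-- **Proposition 2.2** (Harvey–Lawson): for a 3-dimensional real subspace `E ⊆ ℂ³`,
the following are equivalent:
(i) every `g`-orthonormal basis `(u,v,w)` of `E` has `Re(Υ_θ(u,v,w)) = ±1`;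
(ii) `E` is Lagrangian and `Im(Υ_θ)` vanishes on `E`.
(An orthonormal triple in the 3-dimensional subspace `E` is the same thing as an
orthonormal basis of `E`.) -/
theorem special_lagrangian_plane_tfae (θ : ℝ) (E : Submodule ℝ C3)
    (hdim : Module.finrank ℝ E = 3) :
    (∀ u v w : C3, u ∈ E → v ∈ E → w ∈ E →
        gR u u = 1 → gR v v = 1 → gR w w = 1 →
        gR u v = 0 → gR u w = 0 → gR v w = 0 →
        (UpsPh θ u v w).re = 1 ∨ (UpsPh θ u v w).re = -1)
      ↔ ((∀ u ∈ E, ∀ v ∈ E, Om u v = 0) ∧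
          (∀ u ∈ E, ∀ v ∈ E, ∀ w ∈ E, (UpsPh θ u v w).im = 0)) := by
  constructor
  · intro hi
    obtain ⟨u, v, w, hu, hv, hw, h11, h22, h33, h12, h13, h23, hspan⟩ := exists_triple E hdim
    have hre := hi u v w hu hv hw h11 h22 h33 h12 h13 h23
    have hre2 : (UpsPh θ u v w).re ^ 2 = 1 := by
      rcases hre with h | h <;> rw [h] <;> ring
    have hns : (UpsPh θ u v w).re * (UpsPh θ u v w).re + (UpsPh θ u v w).im * (UpsPh θ u v w).im
        = 1 - Om u v ^ 2 - Om u w ^ 2 - Om v w ^ 2 := by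
      rw [← Complex.normSq_apply, normSq_UpsPh, normSq_Ups u v w h11 h22 h33 h12 h13 h23]
    have himB : (UpsPh θ u v w).im = 0 := by nlinarith [sq_nonneg (Om u v), sq_nonneg (Om u w), sq_nonneg (Om v w), sq_nonneg ((UpsPh θ u v w).im)]
    have hp : Om u v = 0 := by nlinarith [sq_nonneg (Om u v), sq_nonneg (Om u w), sq_nonneg (Om v w), sq_nonneg ((UpsPh θ u v w).im)]
    have hq : Om u w = 0 := by nlinarith [sq_nonneg (Om u v), sq_nonneg (Om u w), sq_nonneg (Om v w), sq_nonneg ((UpsPh θ u v w).im)]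
    have hr : Om v w = 0 := by nlinarith [sq_nonneg (Om u v), sq_nonneg (Om u w), sq_nonneg (Om v w), sq_nonneg ((UpsPh θ u v w).im)]
    constructor
    · intro x hx y hy
      obtain ⟨a1, a2, a3, hxe⟩ := hspan x hx
      obtain ⟨b1, b2, b3, hye⟩ := hspan y hy
      rw [hxe, hye]
      exact Om_comb u v w a1 a2 a3 b1 b2 b3 hp hq hr
    · intro x hx y hy z hz
      obtain ⟨a1, a2, a3, hxe⟩ := hspan x hx
      obtain ⟨b1, b2, b3, hye⟩ := hspan y hy
      obtain ⟨c1, c2, c3, hze⟩ := hspan z hz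
      rw [hxe, hye, hze, UpsPh, Ups_comb]
      rw [show Complex.exp (-(θ : ℂ) * Complex.I) *
          (((a1 * (b2 * c3 - b3 * c2) - a2 * (b1 * c3 - b3 * c1)
            + a3 * (b1 * c2 - b2 * c1) : ℝ) : ℂ) * Ups u v w)
          = ((a1 * (b2 * c3 - b3 * c2) - a2 * (b1 * c3 - b3 * c1)
            + a3 * (b1 * c2 - b2 * c1) : ℝ) : ℂ) * UpsPh θ u v w from by rw [UpsPh]; ring]
      rw [Complex.im_ofReal_mul, himB, mul_zero]
  · rintro ⟨hlag, him⟩ u v w hu hv hw h11 h22 h33 h12 h13 h23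
    have hnsq : Complex.normSq (UpsPh θ u v w) = 1 := by
      rw [normSq_UpsPh, normSq_Ups u v w h11 h22 h33 h12 h13 h23,
        hlag u hu v hv, hlag u hu w hw, hlag v hv w hw]
      ring
    have him0 : (UpsPh θ u v w).im = 0 := him u hu v hv w hw
    rw [Complex.normSq_apply, him0, mul_zero, add_zero] at hnsq
    exact mul_self_eq_one_iff.mp hnsq
end
end

section
/- Fix θ ∈ ℝ. For any two 3-dimensional real subspaces E, F ⊆ ℂ³ that are special Lagrangian of phase θ, there exists a matrix A in the special unitary group SU(3) such that the image of E under the ℝ-linear map u ↦ A·u equals F. (Transitivity part of Proposition 2.3.) -/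
noncomputable section

open Complex

/-- `E` is a special Lagrangian 3-plane of phase `θ`: a 3-dimensional real subspace
on which `Ω₀` and `Im Υ_θ` vanish. -/
def IsSpecialLagrangian (θ : ℝ) (E : Submodule ℝ C3) : Prop :=
  Module.finrank ℝ E = 3 ∧ (∀ u ∈ E, ∀ v ∈ E, Om u v = 0) ∧
    ∀ u ∈ E, ∀ v ∈ E, ∀ w ∈ E, (UpsPh θ u v w).im = 0

local instance : InnerProductSpace ℝ (EuclideanSpace ℂ (Fin 3)) :=
  InnerProductSpace.complexToReal

lemma Hh_smul_left (c : ℂ) (u v : C3) : Hh (c • u) v = starRingEnd ℂ c * Hh u v := by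
  simp [Hh, Finset.mul_sum, mul_assoc]

lemma Hh_smul_right (c : ℂ) (u v : C3) : Hh u (c • v) = c * Hh u v := by
  simp only [Hh, Finset.mul_sum, Pi.smul_apply, smul_eq_mul]
  congr 1
  ext i
  ring

lemma exists_su_basis (θ : ℝ) (E : Submodule ℝ C3) (h : IsSpecialLagrangian θ E) :
    ∃ U : Matrix (Fin 3) (Fin 3) ℂ, U ∈ Matrix.unitaryGroup (Fin 3) ℂ ∧
      U.det = Complex.exp ((θ : ℂ) * Complex.I) ∧
      E = Submodule.span ℝ (Set.range fun i => (fun j => U j i : C3)) := by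
  classical
  obtain ⟨hrk, hlag, hsp⟩ := h
  set e : EuclideanSpace ℂ (Fin 3) ≃ₗ[ℝ] C3 :=
    (WithLp.linearEquiv 2 ℂ (Fin 3 → ℂ)).restrictScalars ℝ with he
  set E' : Submodule ℝ (EuclideanSpace ℂ (Fin 3)) := E.comap e.toLinearMap with hE'
  have hE'map : E' = E.map (e.symm.toLinearMap) := by
    rw [hE', Submodule.comap_equiv_eq_map_symm]
  have hrk' : Module.finrank ℝ E' = 3 := by
    rw [hE'map, LinearEquiv.finrank_map_eq]
    exact hrk
  let b : OrthonormalBasis (Fin 3) ℝ E' :=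
    (stdOrthonormalBasis ℝ E').reindex (finCongr hrk')
  set v : Fin 3 → C3 := fun i => e ((b i : EuclideanSpace ℂ (Fin 3))) with hv
  have hv_mem : ∀ i, v i ∈ E := fun i => Submodule.mem_comap.mp (b i).2
  have hkey : ∀ x y : EuclideanSpace ℂ (Fin 3), Hh (e x) (e y) = inner (𝕜 := ℂ) x y := by
    intro x y
    simp [Hh, PiLp.inner_apply, RCLike.inner_apply, he]
    exact Finset.sum_congr rfl (fun _ _ => mul_comm _ _)
  have hHh : ∀ i j, Hh (v i) (v j) = if i = j then 1 else 0 := by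
    intro i j
    have him : (Hh (v i) (v j)).im = 0 := hlag _ (hv_mem i) _ (hv_mem j)
    have hre : (Hh (v i) (v j)).re = if i = j then 1 else 0 := by
      have horth := orthonormal_iff_ite.mp b.orthonormal i j
      rw [Submodule.coe_inner] at horth
      have hri := real_inner_eq_re_inner ℂ ((b i : EuclideanSpace ℂ (Fin 3)))
        ((b j : EuclideanSpace ℂ (Fin 3)))
      rw [hv, hkey]
      have hre' : (inner (𝕜 := ℂ) ((b i : EuclideanSpace ℂ (Fin 3)))
          ((b j : EuclideanSpace ℂ (Fin 3))) : ℂ).re =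
          RCLike.re (inner (𝕜 := ℂ) ((b i : EuclideanSpace ℂ (Fin 3)))
          ((b j : EuclideanSpace ℂ (Fin 3))) : ℂ) := rfl
      rw [hre', ← hri, horth]
    apply Complex.ext
    · rw [hre]; split <;> simp
    · rw [him]; split <;> simp
  set U : Matrix (Fin 3) (Fin 3) ℂ := Matrix.of fun j i => v i j with hU
  have hUstar : ∀ (M : Matrix (Fin 3) (Fin 3) ℂ) (c : Fin 3 → C3),
      M = Matrix.of (fun j i => c i j) →
      (∀ i j, Hh (c i) (c j) = if i = j then 1 else 0) →
      M ∈ Matrix.unitaryGroup (Fin 3) ℂ := by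
    intro M c hM hc
    rw [Matrix.mem_unitaryGroup_iff']
    ext i j
    rw [Matrix.mul_apply]
    have hterm : ∀ k, (star M) i k * M k j = starRingEnd ℂ (c i k) * c j k := by
      intro k
      rw [hM]
      simp [Matrix.star_apply]
    simp_rw [hterm]
    rw [show ∑ k, starRingEnd ℂ (c i k) * c j k = Hh (c i) (c j) from rfl, hc]
    simp [Matrix.one_apply]
  have hUuni : U ∈ Matrix.unitaryGroup (Fin 3) ℂ := hUstar U v rfl hHh
  have hUps : Ups (v 0) (v 1) (v 2) = U.det := by
    unfold Ups
    congr 1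
    ext a c
    fin_cases c <;> rfl
  set z : ℂ := Complex.exp (-(θ : ℂ) * Complex.I) * U.det with hz
  have hz_im : z.im = 0 := by
    have := hsp _ (hv_mem 0) _ (hv_mem 1) _ (hv_mem 2)
    rwa [UpsPh, hUps] at this
  have hz1 : starRingEnd ℂ z * z = 1 := by
    have hd : starRingEnd ℂ U.det * U.det = 1 := (Matrix.det_of_mem_unitary hUuni).1
    have hconj : starRingEnd ℂ (Complex.exp (-(θ : ℂ) * Complex.I)) =
        Complex.exp ((θ : ℂ) * Complex.I) := by
      rw [← Complex.exp_conj]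
      congr 1
      simp
    rw [hz, map_mul, hconj]
    calc Complex.exp ((θ : ℂ) * Complex.I) * starRingEnd ℂ U.det *
          (Complex.exp (-(θ : ℂ) * Complex.I) * U.det)
        = Complex.exp ((θ : ℂ) * Complex.I) * Complex.exp (-(θ : ℂ) * Complex.I) *
          (starRingEnd ℂ U.det * U.det) := by ring
      _ = 1 := by rw [← Complex.exp_add, hd]; simp
  set ε : ℝ := z.re with hε
  have hzε : z = (ε : ℂ) := by
    apply Complex.ext <;> simp [hz_im, hε]
  have hε2 : (ε : ℂ) * (ε : ℂ) = 1 := by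
    have h1 := hz1
    rw [hzε] at h1
    simpa using h1
  have hdetU : U.det = Complex.exp ((θ : ℂ) * Complex.I) * (ε : ℂ) := by
    have h2 : Complex.exp ((θ : ℂ) * Complex.I) * z = U.det := by
      rw [hz, ← mul_assoc, ← Complex.exp_add]
      simp
    rw [← h2, hzε]
  set w : Fin 3 → C3 := fun i => if i = 0 then (ε : ℂ) • v 0 else v i with hw
  set U' : Matrix (Fin 3) (Fin 3) ℂ := Matrix.of fun j i => w i j with hU'
  have hU'col : U' = U.updateCol 0 ((ε : ℂ) • v 0) := by
    ext a c
    rw [Matrix.updateCol_apply]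
    simp only [hU', hU, hw, Matrix.of_apply]
    split <;> rfl
  have hU'det : U'.det = Complex.exp ((θ : ℂ) * Complex.I) := by
    rw [hU'col, Matrix.det_updateCol_smul]
    have hself : U.updateCol 0 (v 0) = U := by
      ext a c
      rw [Matrix.updateCol_apply]
      split
      · next hc => subst hc; rfl
      · rfl
    rw [hself, hdetU,
      show (ε : ℂ) * (Complex.exp ((θ : ℂ) * Complex.I) * ε) =
        Complex.exp ((θ : ℂ) * Complex.I) * ((ε : ℂ) * ε) by ring, hε2, mul_one]
  have hw0 : w 0 = (ε : ℂ) • v 0 := by simp [hw]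
  have hwi : ∀ i, i ≠ 0 → w i = v i := by intro i hi; simp [hw, hi]
  have hHh' : ∀ i j, Hh (w i) (w j) = if i = j then 1 else 0 := by
    intro i j
    rcases eq_or_ne i 0 with rfl | hi <;> rcases eq_or_ne j 0 with rfl | hj
    · rw [hw0, Hh_smul_left, Hh_smul_right, hHh 0 0, Complex.conj_ofReal]
      simp [hε2]
    · rw [hw0, hwi j hj, Hh_smul_left, hHh 0 j, Complex.conj_ofReal]
      simp [Ne.symm hj]
    · rw [hwi i hi, hw0, Hh_smul_right, hHh i 0]
      simp [hi]
    · rw [hwi i hi, hwi j hj, hHh i j]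
  have hU'uni : U' ∈ Matrix.unitaryGroup (Fin 3) ℂ := hUstar U' w rfl hHh'
  have hspan_v : E = Submodule.span ℝ (Set.range v) := by
    have h1 : Submodule.span ℝ (Set.range (fun i => ((b i : EuclideanSpace ℂ (Fin 3))))) = E' := by
      apply le_antisymm
      · rw [Submodule.span_le]
        rintro x ⟨i, rfl⟩
        exact (b i).2
      · intro x hx
        have hx' : (⟨x, hx⟩ : E') ∈ Submodule.span ℝ (Set.range ⇑b.toBasis) := by
          rw [b.toBasis.span_eq]; trivial
        have h2 : x ∈ Submodule.map E'.subtype (Submodule.span ℝ (Set.range ⇑b.toBasis)) :=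
          ⟨⟨x, hx⟩, hx', rfl⟩
        rw [Submodule.map_span] at h2
        refine Submodule.span_mono ?_ h2
        rintro y ⟨s, ⟨i, rfl⟩, rfl⟩
        exact ⟨i, by simp⟩
    have h2 : E = Submodule.map e.toLinearMap E' := by
      rw [hE', Submodule.map_comap_eq, LinearEquiv.range, top_inf_eq]
    rw [h2, ← h1, Submodule.map_span, ← Set.range_comp]
    rfl
  have hspan_w : Submodule.span ℝ (Set.range w) = Submodule.span ℝ (Set.range v) := by
    have hsm : (ε : ℂ) • v 0 = ε • v 0 := by
      funext j
      simp [Complex.real_smul]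
    apply le_antisymm <;> rw [Submodule.span_le] <;> rintro x ⟨i, rfl⟩
    · rcases eq_or_ne i 0 with rfl | hi
      · rw [hw]
        simp only [if_pos rfl]
        rw [hsm]
        exact Submodule.smul_mem _ _ (Submodule.subset_span ⟨0, rfl⟩)
      · rw [hw]
        simp only [if_neg hi]
        exact Submodule.subset_span ⟨i, rfl⟩
    · rcases eq_or_ne i 0 with rfl | hi
      · have hv0 : ε • w 0 = v 0 := by
          rw [hw0]
          funext j
          simp only [Pi.smul_apply, smul_eq_mul, Complex.real_smul]
          rw [← mul_assoc, hε2, one_mul]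
        rw [← hv0]
        exact Submodule.smul_mem _ _ (Submodule.subset_span ⟨0, rfl⟩)
      · have hvi : v i = w i := by rw [hw]; simp [hi]
        rw [hvi]
        exact Submodule.subset_span ⟨i, rfl⟩
  refine ⟨U', hU'uni, hU'det, ?_⟩
  rw [hspan_v, ← hspan_w]
  rfl

/-- **Proposition 2.3, transitivity**: `SU(3)` acts transitively on the set of special
Lagrangian 3-planes of a fixed phase `θ`. -/
theorem su3_transitive_on_special_lagrangians (θ : ℝ) (E F : Submodule ℝ C3)
    (hE : IsSpecialLagrangian θ E) (hF : IsSpecialLagrangian θ F) :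
    ∃ A ∈ Matrix.specialUnitaryGroup (Fin 3) ℂ,
      Submodule.map ((Matrix.mulVecLin A).restrictScalars ℝ) E = F := by
  obtain ⟨U, hU, hUdet, hUspan⟩ := exists_su_basis θ E hE
  obtain ⟨W, hW, hWdet, hWspan⟩ := exists_su_basis θ F hF
  refine ⟨W * star U, ?_, ?_⟩
  · rw [Matrix.mem_specialUnitaryGroup_iff]
    refine ⟨mul_mem hW (Unitary.star_mem hU), ?_⟩
    rw [Matrix.det_mul, hWdet, Matrix.star_eq_conjTranspose, Matrix.det_conjTranspose, hUdet]
    have hst : star (Complex.exp ((θ : ℂ) * Complex.I)) =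
        Complex.exp (-((θ : ℂ) * Complex.I)) := by
      rw [show (star (Complex.exp ((θ : ℂ) * Complex.I))) =
        starRingEnd ℂ (Complex.exp ((θ : ℂ) * Complex.I)) from rfl, ← Complex.exp_conj]
      congr 1
      simp
    rw [hst, ← Complex.exp_add]
    simp
  · have hcol : ∀ i, (W * star U).mulVec (fun j => U j i) = fun j => W j i := by
      intro i
      have h1 : (fun j => U j i) = U.mulVec (Pi.single i 1) := by
        funext j
        simp [Matrix.mulVec_single]
      rw [h1, Matrix.mulVec_mulVec, mul_assoc, hU.1, mul_one]
      funext j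
      simp [Matrix.mulVec_single]
    rw [hUspan, hWspan, Submodule.map_span]
    congr 1
    rw [← Set.range_comp]
    have hfun : (⇑((Matrix.mulVecLin (W * star U)).restrictScalars ℝ)) ∘
        (fun i => (fun j => U j i : C3)) = fun i => (fun j => W j i : C3) := by
      funext i
      simp only [Function.comp_apply, LinearMap.coe_restrictScalars, Matrix.mulVecLin_apply]
      exact hcol i
    rw [hfun]
end
end

section
/- Every Lagrangian 3-plane is special Lagrangian of some phase: if E ⊆ ℂ³ is a 3-dimensional real subspace with Ω₀(u,v) = 0 for all u, v ∈ E, then there exists θ ∈ ℝ such that E is special Lagrangian of phase θ, i.e. Im(e^{−iθ}·Υ₀(u,v,w)) = 0 for all u, v, w ∈ E. Equivalently, for any g-orthonormal basis (u,v,w) of a Lagrangian 3-plane E, |Υ₀(u,v,w)| = 1. -/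
noncomputable section

open Complex

lemma exp_neg_arg_mul (w : ℂ) :
    Complex.exp (-(w.arg : ℂ) * Complex.I) * w = (‖w‖ : ℂ) := by
  nth_rewrite 2 [← Complex.norm_mul_exp_arg_mul_I w]
  rw [mul_comm ((‖w‖ : ℂ)) _, ← mul_assoc, ← Complex.exp_add]
  simp

lemma coe_repr_sum (E : Submodule ℝ C3) (b : Module.Basis (Fin 3) ℝ E) (x : E) (i : Fin 3) :
    (x : C3) i = ∑ k, (b.repr x k : ℂ) * ((b k : C3) i) := by
  conv_lhs => rw [← b.sum_repr x]
  push_cast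
  simp [Finset.sum_apply, Complex.real_smul]

lemma Ups_factor (E : Submodule ℝ C3) (b : Module.Basis (Fin 3) ℝ E)
    (u v w : C3) (hu : u ∈ E) (hv : v ∈ E) (hw : w ∈ E) :
    ∃ r : ℝ, Ups u v w = (r : ℂ) * Ups (b 0 : C3) (b 1 : C3) (b 2 : C3) := by
  set A : Matrix (Fin 3) (Fin 3) ℝ :=
    Matrix.of fun k j => b.repr (![⟨u, hu⟩, ⟨v, hv⟩, ⟨w, hw⟩] j) k with hA
  set B : Matrix (Fin 3) (Fin 3) ℂ := Matrix.of fun i k => (b k : C3) i with hB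
  have hM : (Matrix.of fun i j => ![u, v, w] j i) = B * A.map Complex.ofRealHom := by
    ext i j
    simp only [Matrix.mul_apply, Matrix.map_apply, Matrix.of_apply, hA, hB]
    fin_cases j
    · simpa [mul_comm] using coe_repr_sum E b ⟨u, hu⟩ i
    · simpa [mul_comm] using coe_repr_sum E b ⟨v, hv⟩ i
    · simpa [mul_comm] using coe_repr_sum E b ⟨w, hw⟩ i
  refine ⟨A.det, ?_⟩
  have h1 : Ups u v w = B.det * (A.map Complex.ofRealHom).det := by
    rw [Ups, hM, Matrix.det_mul]
  have h2 : (A.map Complex.ofRealHom).det = (A.det : ℂ) := by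
    rw [show A.map ⇑Complex.ofRealHom = Complex.ofRealHom.mapMatrix A from rfl,
      ← RingHom.map_det]; rfl
  have h3 : Ups (b 0 : C3) (b 1 : C3) (b 2 : C3) = B.det := by
    unfold Ups
    congr 1
    ext i j
    fin_cases j <;> rfl
  rw [h1, h2, h3]; ring

/-- Every Lagrangian 3-plane in `ℂ³` is special Lagrangian of some phase `θ`;
equivalently, `|Υ₀(u,v,w)| = 1` for every `g`-orthonormal basis `(u,v,w)` of a
Lagrangian 3-plane. -/
theorem lagrangian_is_special_of_some_phase (E : Submodule ℝ C3)
    (hdim : Module.finrank ℝ E = 3)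
    (hlag : ∀ u ∈ E, ∀ v ∈ E, Om u v = 0) :
    (∃ θ : ℝ, ∀ u ∈ E, ∀ v ∈ E, ∀ w ∈ E,
        (Complex.exp (-(θ : ℂ) * Complex.I) * Ups u v w).im = 0) ∧
    (∀ u v w : C3, u ∈ E → v ∈ E → w ∈ E →
        gR u u = 1 → gR v v = 1 → gR w w = 1 →
        gR u v = 0 → gR u w = 0 → gR v w = 0 →
        ‖Ups u v w‖ = 1) := by
  have hH : ∀ x ∈ E, ∀ y ∈ E, Hh x y = (gR x y : ℂ) := by
    intro x hx y hy
    apply Complex.ext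
    · simp [gR]
    · simpa [Om] using hlag x hx y hy
  have hgsym : ∀ x y : C3, gR y x = gR x y := by
    intro x y
    have : Hh y x = starRingEnd ℂ (Hh x y) := by
      simp [Hh, map_sum, map_mul, mul_comm]
    simp [gR, this]
  constructor
  · have b : Module.Basis (Fin 3) ℝ E := Module.finBasisOfFinrankEq ℝ E hdim
    refine ⟨(Ups (b 0 : C3) (b 1 : C3) (b 2 : C3)).arg, ?_⟩
    intro u hu v hv w hw
    obtain ⟨r, hr⟩ := Ups_factor E b u v w hu hv hw
    rw [hr]
    set z := Ups (b 0 : C3) (b 1 : C3) (b 2 : C3) with hz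
    have : Complex.exp (-(z.arg : ℂ) * Complex.I) * ((r : ℂ) * z)
        = (r : ℂ) * ((‖z‖ : ℂ)) := by
      rw [← exp_neg_arg_mul z]; ring
    rw [this, ← Complex.ofReal_mul, Complex.ofReal_im]
  · intro u v w hu hv hw huu hvv hww huv huw hvw
    have e00 : Hh u u = 1 := by rw [hH u hu u hu, huu]; norm_num
    have e11 : Hh v v = 1 := by rw [hH v hv v hv, hvv]; norm_num
    have e22 : Hh w w = 1 := by rw [hH w hw w hw, hww]; norm_num
    have e01 : Hh u v = 0 := by rw [hH u hu v hv, huv]; norm_num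
    have e02 : Hh u w = 0 := by rw [hH u hu w hw, huw]; norm_num
    have e12 : Hh v w = 0 := by rw [hH v hv w hw, hvw]; norm_num
    have e10 : Hh v u = 0 := by rw [hH v hv u hu, hgsym u v, huv]; norm_num
    have e20 : Hh w u = 0 := by rw [hH w hw u hu, hgsym u w, huw]; norm_num
    have e21 : Hh w v = 0 := by rw [hH w hw v hv, hgsym v w, hvw]; norm_num
    set M : Matrix (Fin 3) (Fin 3) ℂ := Matrix.of fun i j => ![u, v, w] j i with hMdef
    have hunit : M.conjTranspose * M = 1 := by
      ext j k
      simp only [Matrix.mul_apply, Matrix.conjTranspose_apply, Matrix.of_apply, hMdef]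
      have key : ∑ i, star (![u, v, w] j i) * ![u, v, w] k i = Hh (![u, v, w] j) (![u, v, w] k) := by
        simp only [Hh, starRingEnd_apply]
      rw [key]
      fin_cases j <;> fin_cases k <;>
        simp [e00, e01, e02, e10, e11, e12, e20, e21, e22, Matrix.one_apply]
    have hdet : starRingEnd ℂ M.det * M.det = 1 := by
      have h := congrArg Matrix.det hunit
      rwa [Matrix.det_mul, Matrix.det_conjTranspose, Matrix.det_one,
        ← starRingEnd_apply] at h
    have hns : Complex.normSq M.det = 1 := by
      have h2 : M.det * starRingEnd ℂ M.det = 1 := by rw [mul_comm]; exact hdet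
      rw [Complex.mul_conj] at h2
      exact_mod_cast h2
    have hU : Ups u v w = M.det := rfl
    rw [hU, Complex.norm_def, hns, Real.sqrt_one]
end
end
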